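/- In the group G = ⟨a, b⟩ the relation (ab)^16 = id holds. -/

import Mathlib

/-!
Setup: the automorphism group `Aut(T₈)` of the rooted 8-regular tree, realized
as the group of *portraits*: an automorphism is determined by the permutation
of `{1,…,8}` (here `Fin 8`) that it induces below each vertex (a finite word
over the alphabet).  Composition is written left-to-right: `p * q` acts by
first applying `p`, then `q` (this is the convention of the paper, where a
word `a b a b⁻¹ a` acts by applying `a` first).
-/

namespace T8

/-- The root permutation of the generator `a` : `(34)(67)(58)` on letters
`1,…,8`, written `0`-indexed on `Fin 8` as `(2 3)(5 6)(4 7)`. -/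
def σa : Equiv.Perm (Fin 8) := Equiv.swap 2 3 * Equiv.swap 5 6 * Equiv.swap 4 7

/-- The root permutation of the generator `b` : `(123)(456)` on letters
`1,…,8`, written `0`-indexed on `Fin 8` as `(0 1 2)(3 4 5)`. -/
def σb : Equiv.Perm (Fin 8) :=
  (Equiv.swap 0 1 * Equiv.swap 1 2) * (Equiv.swap 3 4 * Equiv.swap 4 5)

/-- An automorphism of the rooted `8`-regular tree, given by its portrait:
for each vertex `v` (a finite word over the `8`-letter alphabet), the
permutation induced on the letters just below `v`. -/
@[ext] structure Aut where
  val : List (Fin 8) → Equiv.Perm (Fin 8)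

/-- The section (state) of a tree automorphism at a first-level vertex `i`. -/
def sect (p : Aut) (i : Fin 8) : Aut := ⟨fun v => p.val (i :: v)⟩

/-- The section of a tree automorphism at an arbitrary vertex (word) `v`. -/
def sectWord (p : Aut) : List (Fin 8) → Aut
  | [] => p
  | i :: t => sectWord (sect p i) t

/-- The action of a tree automorphism on vertices:
`p (i·w) = (σ_p i) · (p_i w)` where `σ_p = p.val []` is the root permutation
and `p_i` is the section at `i`.  This is length- and prefix-preserving. -/
def act : Aut → List (Fin 8) → List (Fin 8)
  | _, [] => []
  | p, i :: t => p.val [] i :: act (sect p i) t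

/-- The action of the inverse of a tree automorphism on vertices. -/
def actInv : Aut → List (Fin 8) → List (Fin 8)
  | _, [] => []
  | p, i :: t => (p.val [])⁻¹ i :: actInv (sect p ((p.val [])⁻¹ i)) t

instance : One Aut := ⟨⟨fun _ => 1⟩⟩
instance : Mul Aut := ⟨fun p q => ⟨fun v => q.val (act p v) * p.val v⟩⟩
instance : Inv Aut := ⟨fun p => ⟨fun v => (p.val (actInv p v))⁻¹⟩⟩

@[simp] lemma one_val (v : List (Fin 8)) : (1 : Aut).val v = 1 := rfl
@[simp] lemma mul_val (p q : Aut) (v : List (Fin 8)) :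
    (p * q).val v = q.val (act p v) * p.val v := rfl
@[simp] lemma inv_val (p : Aut) (v : List (Fin 8)) :
    (p⁻¹).val v = (p.val (actInv p v))⁻¹ := rfl

@[simp] lemma sect_one (i : Fin 8) : sect 1 i = 1 := rfl

lemma sect_mul (p q : Aut) (i : Fin 8) :
    sect (p * q) i = sect p i * sect q (p.val [] i) := rfl

lemma sect_inv (p : Aut) (i : Fin 8) :
    sect p⁻¹ i = (sect p ((p.val [])⁻¹ i))⁻¹ := rfl

lemma act_one : ∀ v : List (Fin 8), act (1 : Aut) v = v
  | [] => rfl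
  | i :: t => by
    show (1 : Equiv.Perm (Fin 8)) i :: act (sect 1 i) t = i :: t
    rw [sect_one, act_one t, Equiv.Perm.one_apply]

lemma act_mul : ∀ (v : List (Fin 8)) (p q : Aut),
    act (p * q) v = act q (act p v)
  | [], _, _ => rfl
  | i :: t, p, q => by
    show (p * q).val [] i :: act (sect (p * q) i) t
        = act q (p.val [] i :: act (sect p i) t)
    rw [sect_mul, act_mul t]
    show (q.val (act p []) * p.val []) i :: _
        = q.val [] (p.val [] i) :: act (sect q (p.val [] i)) (act (sect p i) t)
    rfl

lemma act_inv : ∀ (v : List (Fin 8)) (p : Aut), act p⁻¹ v = actInv p v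
  | [], _ => rfl
  | i :: t, p => by
    show (p⁻¹).val [] i :: act (sect p⁻¹ i) t
        = (p.val [])⁻¹ i :: actInv (sect p ((p.val [])⁻¹ i)) t
    rw [sect_inv, act_inv t]
    rfl

lemma actInv_act : ∀ (v : List (Fin 8)) (p : Aut), actInv p (act p v) = v
  | [], _ => rfl
  | i :: t, p => by
    show (p.val [])⁻¹ (p.val [] i) ::
        actInv (sect p ((p.val [])⁻¹ (p.val [] i))) (act (sect p i) t) = i :: t
    rw [(Equiv.Perm.inv_eq_iff_eq (f := p.val []) (x := p.val [] i) (y := i)).mpr rfl,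
      actInv_act t]

lemma act_actInv : ∀ (v : List (Fin 8)) (p : Aut), act p (actInv p v) = v
  | [], _ => rfl
  | i :: t, p => by
    show p.val [] ((p.val [])⁻¹ i) ::
        act (sect p ((p.val [])⁻¹ i)) (actInv (sect p ((p.val [])⁻¹ i)) t) = i :: t
    rw [(Equiv.Perm.eq_inv_iff_eq (f := p.val []) (x := (p.val [])⁻¹ i) (y := i)).mp rfl,
      act_actInv t]

instance : Group Aut where
  mul_assoc p q r := by
    ext v i
    simp [mul_val, act_mul, mul_assoc]
  one_mul p := by
    ext v i
    simp [mul_val, act_one]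
  mul_one p := by
    ext v i
    simp [mul_val]
  inv_mul_cancel p := by
    ext v i
    simp [mul_val, inv_val, act_inv, actInv_act]

/-- The portrait of the generator `a = ⟨a, 1, 1, 1, 1, 1, 1, 1⟩ (34)(67)(58)`:
root permutation `σa`, section `a` at the first letter, trivial sections
elsewhere. -/
def aval : List (Fin 8) → Equiv.Perm (Fin 8)
  | [] => σa
  | i :: t => if i = 0 then aval t else 1

/-- The generator `a = ⟨a, 1, 1, 1, 1, 1, 1, 1⟩ (34)(67)(58)`. -/
def a : Aut := ⟨aval⟩

/-- The portraits of the generator `b` (for `tt`) and of `b⁻¹` (for `ff`):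
`b = ⟨1, 1, 1, 1, 1, 1, b, b⁻¹⟩ (123)(456)` and
`b⁻¹ = ⟨1, 1, 1, 1, 1, 1, b⁻¹, b⟩ (132)(465)`. -/
def bval : Bool → List (Fin 8) → Equiv.Perm (Fin 8)
  | s, [] => if s then σb else σb⁻¹
  | s, i :: t => if i = 6 then bval s t else if i = 7 then bval (!s) t else 1

/-- The generator `b = ⟨1, 1, 1, 1, 1, 1, b, b⁻¹⟩ (123)(456)`. -/
def b : Aut := ⟨bval true⟩

/-- Sanity: the first section of `a` is `a` itself. -/
lemma sect_a_zero : sect a 0 = a := rfl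

/-- Sanity: the section of `b` at the letter `7` (index `6`) is `b` itself. -/
lemma sect_b_six : sect b 6 = b := rfl

/-- The group `G = ⟨a, b⟩ = ⟨a, b, b⁻¹⟩ ≤ Aut(T₈)` of the paper. -/
def G : Subgroup Aut := Subgroup.closure {a, b}

lemma a_mem : a ∈ G := Subgroup.subset_closure (Set.mem_insert _ _)

lemma b_mem : b ∈ G := Subgroup.subset_closure (Set.mem_insert_of_mem _ rfl)

end T8


namespace T8

/-- The portrait of `b⁻¹`. -/
def bb : Aut := ⟨bval false⟩

lemma eq_one_of (p : Aut) (h0 : p.val [] = 1) (h : ∀ i, sect p i = 1) : p = 1 :=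
  Aut.ext (funext fun v => by
    cases v with
    | nil => exact h0
    | cons i t =>
      show (sect p i).val t = 1
      rw [h i]
      rfl)

lemma a2_val : ∀ v, (a * a).val v = 1
  | [] => by decide
  | i :: t => by
    show (sect a i * sect a (a.val [] i)).val t = 1
    fin_cases i
    · exact a2_val t
    all_goals
      show ((1 : Aut) * (1 : Aut)).val t = 1
    all_goals exact one_mul (1 : Equiv.Perm (Fin 8))

lemma a2 : a * a = 1 := Aut.ext (funext a2_val)

lemma bbb_val : ∀ v, (b * bb).val v = 1 ∧ (bb * b).val v = 1
  | [] => by constructor <;> decide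
  | i :: t => by
    obtain ⟨h1, h2⟩ := bbb_val t
    constructor
    · show (sect b i * sect bb (b.val [] i)).val t = 1
      fin_cases i
      · exact one_mul 1
      · exact one_mul 1
      · exact one_mul 1
      · exact one_mul 1
      · exact one_mul 1
      · exact one_mul 1
      · exact h1
      · exact h2
    · show (sect bb i * sect b (bb.val [] i)).val t = 1
      fin_cases i
      · exact one_mul 1
      · exact one_mul 1
      · exact one_mul 1
      · exact one_mul 1
      · exact one_mul 1
      · exact one_mul 1
      · exact h2
      · exact h1

lemma b_bb : b * bb = 1 := Aut.ext (funext fun v => (bbb_val v).1)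
lemma bb_b : bb * b = 1 := Aut.ext (funext fun v => (bbb_val v).2)

lemma a2X (x : Aut) : a * (a * x) = x := by rw [← mul_assoc, a2, one_mul]
lemma b_bbX (x : Aut) : b * (bb * x) = x := by rw [← mul_assoc, b_bb, one_mul]
lemma bb_bX (x : Aut) : bb * (b * x) = x := by rw [← mul_assoc, bb_b, one_mul]

@[simp] lemma mul_val_nil_apply (p q : Aut) (i : Fin 8) :
    (p * q).val [] i = q.val [] (p.val [] i) := rfl

end T8

namespace T8

@[simp] lemma av0 : a.val [] 0 = 0 := by decide
@[simp] lemma bv0 : b.val [] 0 = 1 := by decide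
@[simp] lemma sa0 : sect a 0 = a := rfl
@[simp] lemma sb0 : sect b 0 = 1 := rfl
@[simp] lemma av1 : a.val [] 1 = 1 := by decide
@[simp] lemma bv1 : b.val [] 1 = 2 := by decide
@[simp] lemma sa1 : sect a 1 = 1 := rfl
@[simp] lemma sb1 : sect b 1 = 1 := rfl
@[simp] lemma av2 : a.val [] 2 = 3 := by decide
@[simp] lemma bv2 : b.val [] 2 = 0 := by decide
@[simp] lemma sa2 : sect a 2 = 1 := rfl
@[simp] lemma sb2 : sect b 2 = 1 := rfl
@[simp] lemma av3 : a.val [] 3 = 2 := by decide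
@[simp] lemma bv3 : b.val [] 3 = 4 := by decide
@[simp] lemma sa3 : sect a 3 = 1 := rfl
@[simp] lemma sb3 : sect b 3 = 1 := rfl
@[simp] lemma av4 : a.val [] 4 = 7 := by decide
@[simp] lemma bv4 : b.val [] 4 = 5 := by decide
@[simp] lemma sa4 : sect a 4 = 1 := rfl
@[simp] lemma sb4 : sect b 4 = 1 := rfl
@[simp] lemma av5 : a.val [] 5 = 6 := by decide
@[simp] lemma bv5 : b.val [] 5 = 3 := by decide
@[simp] lemma sa5 : sect a 5 = 1 := rfl
@[simp] lemma sb5 : sect b 5 = 1 := rfl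
@[simp] lemma av6 : a.val [] 6 = 5 := by decide
@[simp] lemma bv6 : b.val [] 6 = 6 := by decide
@[simp] lemma sa6 : sect a 6 = 1 := rfl
@[simp] lemma sb6 : sect b 6 = b := rfl
@[simp] lemma av7 : a.val [] 7 = 4 := by decide
@[simp] lemma bv7 : b.val [] 7 = 7 := by decide
@[simp] lemma sa7 : sect a 7 = 1 := rfl
@[simp] lemma sb7 : sect b 7 = bb := rfl

set_option maxRecDepth 8000 in
/-- the relation `(ab)^16 = id` holds in `G`. -/
theorem stmt_4 : (a * b) ^ 16 = 1 := by
  have e : (a * b) ^ 16 = a*b*(a*b)*(a*b)*(a*b)*(a*b)*(a*b)*(a*b)*(a*b)*(a*b)*(a*b)*(a*b)*(a*b)*(a*b)*(a*b)*(a*b)*(a*b) := by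
    rw [pow_succ, pow_succ, pow_succ, pow_succ, pow_succ, pow_succ, pow_succ, pow_succ,
      pow_succ, pow_succ, pow_succ, pow_succ, pow_succ, pow_succ, pow_succ, pow_one]
  rw [e]
  refine eq_one_of _ (by decide) ?_
  intro i
  fin_cases i
  · show sect (a*b*(a*b)*(a*b)*(a*b)*(a*b)*(a*b)*(a*b)*(a*b)*(a*b)*(a*b)*(a*b)*(a*b)*(a*b)*(a*b)*(a*b)*(a*b)) (0 : Fin 8) = 1
    simp only [sect_mul, mul_val_nil_apply, av0, av1, av2, av3, av4, av5, av6, av7,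
        bv0, bv1, bv2, bv3, bv4, bv5, bv6, bv7, sa0, sa1, sa2, sa3, sa4, sa5, sa6, sa7,
        sb0, sb1, sb2, sb3, sb4, sb5, sb6, sb7, one_mul, mul_one, mul_assoc,
        a2X, b_bbX, bb_bX, a2, b_bb, bb_b]
  · show sect (a*b*(a*b)*(a*b)*(a*b)*(a*b)*(a*b)*(a*b)*(a*b)*(a*b)*(a*b)*(a*b)*(a*b)*(a*b)*(a*b)*(a*b)*(a*b)) (1 : Fin 8) = 1
    simp only [sect_mul, mul_val_nil_apply, av0, av1, av2, av3, av4, av5, av6, av7,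
        bv0, bv1, bv2, bv3, bv4, bv5, bv6, bv7, sa0, sa1, sa2, sa3, sa4, sa5, sa6, sa7,
        sb0, sb1, sb2, sb3, sb4, sb5, sb6, sb7, one_mul, mul_one, mul_assoc,
        a2X, b_bbX, bb_bX, a2, b_bb, bb_b]
  · show sect (a*b*(a*b)*(a*b)*(a*b)*(a*b)*(a*b)*(a*b)*(a*b)*(a*b)*(a*b)*(a*b)*(a*b)*(a*b)*(a*b)*(a*b)*(a*b)) (2 : Fin 8) = 1
    simp only [sect_mul, mul_val_nil_apply, av0, av1, av2, av3, av4, av5, av6, av7,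
        bv0, bv1, bv2, bv3, bv4, bv5, bv6, bv7, sa0, sa1, sa2, sa3, sa4, sa5, sa6, sa7,
        sb0, sb1, sb2, sb3, sb4, sb5, sb6, sb7, one_mul, mul_one, mul_assoc,
        a2X, b_bbX, bb_bX, a2, b_bb, bb_b]
  · show sect (a*b*(a*b)*(a*b)*(a*b)*(a*b)*(a*b)*(a*b)*(a*b)*(a*b)*(a*b)*(a*b)*(a*b)*(a*b)*(a*b)*(a*b)*(a*b)) (3 : Fin 8) = 1
    simp only [sect_mul, mul_val_nil_apply, av0, av1, av2, av3, av4, av5, av6, av7,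
        bv0, bv1, bv2, bv3, bv4, bv5, bv6, bv7, sa0, sa1, sa2, sa3, sa4, sa5, sa6, sa7,
        sb0, sb1, sb2, sb3, sb4, sb5, sb6, sb7, one_mul, mul_one, mul_assoc,
        a2X, b_bbX, bb_bX, a2, b_bb, bb_b]
  · show sect (a*b*(a*b)*(a*b)*(a*b)*(a*b)*(a*b)*(a*b)*(a*b)*(a*b)*(a*b)*(a*b)*(a*b)*(a*b)*(a*b)*(a*b)*(a*b)) (4 : Fin 8) = 1
    simp only [sect_mul, mul_val_nil_apply, av0, av1, av2, av3, av4, av5, av6, av7,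
        bv0, bv1, bv2, bv3, bv4, bv5, bv6, bv7, sa0, sa1, sa2, sa3, sa4, sa5, sa6, sa7,
        sb0, sb1, sb2, sb3, sb4, sb5, sb6, sb7, one_mul, mul_one, mul_assoc,
        a2X, b_bbX, bb_bX, a2, b_bb, bb_b]
  · show sect (a*b*(a*b)*(a*b)*(a*b)*(a*b)*(a*b)*(a*b)*(a*b)*(a*b)*(a*b)*(a*b)*(a*b)*(a*b)*(a*b)*(a*b)*(a*b)) (5 : Fin 8) = 1
    simp only [sect_mul, mul_val_nil_apply, av0, av1, av2, av3, av4, av5, av6, av7,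
        bv0, bv1, bv2, bv3, bv4, bv5, bv6, bv7, sa0, sa1, sa2, sa3, sa4, sa5, sa6, sa7,
        sb0, sb1, sb2, sb3, sb4, sb5, sb6, sb7, one_mul, mul_one, mul_assoc,
        a2X, b_bbX, bb_bX, a2, b_bb, bb_b]
  · show sect (a*b*(a*b)*(a*b)*(a*b)*(a*b)*(a*b)*(a*b)*(a*b)*(a*b)*(a*b)*(a*b)*(a*b)*(a*b)*(a*b)*(a*b)*(a*b)) (6 : Fin 8) = 1
    simp only [sect_mul, mul_val_nil_apply, av0, av1, av2, av3, av4, av5, av6, av7,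
        bv0, bv1, bv2, bv3, bv4, bv5, bv6, bv7, sa0, sa1, sa2, sa3, sa4, sa5, sa6, sa7,
        sb0, sb1, sb2, sb3, sb4, sb5, sb6, sb7, one_mul, mul_one, mul_assoc,
        a2X, b_bbX, bb_bX, a2, b_bb, bb_b]
  · show sect (a*b*(a*b)*(a*b)*(a*b)*(a*b)*(a*b)*(a*b)*(a*b)*(a*b)*(a*b)*(a*b)*(a*b)*(a*b)*(a*b)*(a*b)*(a*b)) (7 : Fin 8) = 1
    simp only [sect_mul, mul_val_nil_apply, av0, av1, av2, av3, av4, av5, av6, av7,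
        bv0, bv1, bv2, bv3, bv4, bv5, bv6, bv7, sa0, sa1, sa2, sa3, sa4, sa5, sa6, sa7,
        sb0, sb1, sb2, sb3, sb4, sb5, sb6, sb7, one_mul, mul_one, mul_assoc,
        a2X, b_bbX, bb_bX, a2, b_bb, bb_b]

end T8
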